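/- Let 0 < h ≤ a, where a is the real root of a^3 + 2a^2 + 3a - 2 = 0, let S = 2(1+h)/(h^2+2h+3), ε₂ = h(1+h)/2, and suppose ε : ℕ → ℝ satisfies ε₁ = 1, and εₙ ≤ S^{n-2} · ε₂ · (N₁ h)^{2^{n-1}-2} for n ≥ 2, with N₁ = (h^2+2h+3)/2. Then the series γ = Σ_{n≥1} εₙ converges and satisfies 1 ≤ γ ≤ 1 + ε₂/(1 - S (N₁ h)^2) ≤ (2 - a - a^2)/(2(1 - a - a^2)). -/

import Mathlib

set_option maxHeartbeats 1000000


theorem gamma_series_bounds (a : ℝ) (ha : a ^ 3 + 2 * a ^ 2 + 3 * a - 2 = 0)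
    (ha1 : (0.477 : ℝ) < a) (ha2 : a < 0.478)
    (h : ℝ) (hh0 : 0 < h) (hha : h ≤ a)
    (S N₁ ε₂ : ℝ) (hS : S = 2 * (1 + h) / (h ^ 2 + 2 * h + 3))
    (hN₁ : N₁ = (h ^ 2 + 2 * h + 3) / 2) (hε₂ : ε₂ = h * (1 + h) / 2)
    (ε : ℕ → ℝ) (hεpos : ∀ n, 0 ≤ ε n) (hε1 : ε 1 = 1)
    (hεn : ∀ n, 2 ≤ n → ε n ≤ S ^ (n - 2) * ε₂ * (N₁ * h) ^ (2 ^ (n - 1) - 2)) :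
    Summable (fun n : ℕ => ε (n + 1)) ∧
      1 ≤ ∑' n : ℕ, ε (n + 1) ∧
      (∑' n : ℕ, ε (n + 1)) ≤ 1 + ε₂ / (1 - S * (N₁ * h) ^ 2) ∧
      1 + ε₂ / (1 - S * (N₁ * h) ^ 2) ≤ (2 - a - a ^ 2) / (2 * (1 - a - a ^ 2)) := by
  have hD : (0:ℝ) < h ^ 2 + 2 * h + 3 := by nlinarith
  have hS0 : 0 ≤ S := by
    rw [hS]; positivity
  have hNh0 : 0 ≤ N₁ * h := by
    rw [hN₁]; positivity
  have hNh1 : N₁ * h ≤ 1 := by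
    rw [hN₁]
    nlinarith [sq_nonneg (a - h), sq_nonneg (a + h), mul_pos hh0 hh0]
  have hr_eq : S * (N₁ * h) ^ 2 = (1 + h) * h ^ 2 * (h ^ 2 + 2 * h + 3) / 2 := by
    rw [hS, hN₁]
    field_simp
  have hr_le : S * (N₁ * h) ^ 2 ≤ a + a ^ 2 := by
    rw [hr_eq]
    nlinarith [sq_nonneg (a - h), sq_nonneg (a + h), mul_pos hh0 hh0,
      mul_nonneg (sub_nonneg.mpr hha) (sq_nonneg h),
      mul_nonneg (mul_nonneg (sub_nonneg.mpr hha) (sq_nonneg h)) hh0.le,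
      mul_nonneg (mul_nonneg (sub_nonneg.mpr hha) (sq_nonneg h)) (sq_nonneg h)]
  have hr0 : 0 ≤ S * (N₁ * h) ^ 2 := by positivity
  have haa : a + a ^ 2 < 1 := by nlinarith
  have hr1 : S * (N₁ * h) ^ 2 < 1 := lt_of_le_of_lt hr_le haa
  have hε20 : 0 ≤ ε₂ := by rw [hε₂]; positivity
  -- key pointwise bound
  have key : ∀ n : ℕ, ε (n + 2) ≤ ε₂ * (S * (N₁ * h) ^ 2) ^ n := by
    intro n
    have h1 := hεn (n + 2) (by omega)
    have e1 : n + 2 - 2 = n := by omega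
    have e2 : n + 2 - 1 = n + 1 := by omega
    rw [e1, e2] at h1
    have hexp : 2 * n ≤ 2 ^ (n + 1) - 2 := by
      have := Nat.lt_two_pow_self (n := n)
      have h2 : 2 ^ (n + 1) = 2 * 2 ^ n := by ring
      omega
    have h2 : (N₁ * h) ^ (2 ^ (n + 1) - 2) ≤ (N₁ * h) ^ (2 * n) :=
      pow_le_pow_of_le_one hNh0 hNh1 hexp
    calc ε (n + 2) ≤ S ^ n * ε₂ * (N₁ * h) ^ (2 ^ (n + 1) - 2) := h1
      _ ≤ S ^ n * ε₂ * (N₁ * h) ^ (2 * n) := by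
          apply mul_le_mul_of_nonneg_left h2
          exact mul_nonneg (pow_nonneg hS0 n) hε20
      _ = ε₂ * (S * (N₁ * h) ^ 2) ^ n := by
          have e3 : (S * (N₁ * h) ^ 2) ^ n = S ^ n * (N₁ * h) ^ (2 * n) := by
            rw [mul_pow, ← pow_mul, mul_comm 2 n]
          rw [e3]; ring
  have hgeo : Summable (fun n : ℕ => ε₂ * (S * (N₁ * h) ^ 2) ^ n) :=
    (summable_geometric_of_lt_one hr0 hr1).mul_left ε₂
  have hsum2 : Summable (fun n : ℕ => ε (n + 2)) :=
    Summable.of_nonneg_of_le (fun n => hεpos _) key hgeo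
  have hsum1 : Summable (fun n : ℕ => ε (n + 1)) := by
    have := (summable_nat_add_iff (f := fun n : ℕ => ε (n + 1)) 1).mp
      (by simpa [add_assoc] using hsum2)
    exact this
  have htail0 : 0 ≤ ∑' n : ℕ, ε (n + 2) := tsum_nonneg fun n => hεpos _
  have ht : ∑' n : ℕ, ε (n + 1) = 1 + ∑' n : ℕ, ε (n + 2) := by
    rw [Summable.tsum_eq_zero_add hsum1]
    simp [hε1, add_assoc]
  have htail : ∑' n : ℕ, ε (n + 2) ≤ ε₂ / (1 - S * (N₁ * h) ^ 2) := by
    have := Summable.tsum_le_tsum key hsum2 hgeo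
    rw [tsum_mul_left, tsum_geometric_of_lt_one hr0 hr1] at this
    calc ∑' n : ℕ, ε (n + 2) ≤ ε₂ * (1 - S * (N₁ * h) ^ 2)⁻¹ := this
      _ = ε₂ / (1 - S * (N₁ * h) ^ 2) := by rw [div_eq_mul_inv]
  refine ⟨hsum1, ?_, ?_, ?_⟩
  · rw [ht]; linarith
  · rw [ht]; linarith
  · -- final inequality
    have h1r : 0 < 1 - S * (N₁ * h) ^ 2 := by linarith
    have h1a : 0 < 1 - a - a ^ 2 := by nlinarith
    have h2e : 2 * ε₂ ≤ a + a ^ 2 := by rw [hε₂]; nlinarith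
    have ha0 : (0:ℝ) ≤ a + a ^ 2 := add_nonneg (by linarith) (sq_nonneg a)
    have hstep : ε₂ / (1 - S * (N₁ * h) ^ 2) ≤ (a + a ^ 2) / (2 * (1 - a - a ^ 2)) := by
      rw [div_le_div_iff₀ h1r (by linarith)]
      have A : (2 * ε₂) * (1 - a - a ^ 2) ≤ (a + a ^ 2) * (1 - a - a ^ 2) :=
        mul_le_mul_of_nonneg_right h2e h1a.le
      have B : (a + a ^ 2) * (1 - a - a ^ 2) ≤ (a + a ^ 2) * (1 - S * (N₁ * h) ^ 2) :=
        mul_le_mul_of_nonneg_left (by linarith) ha0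
      linarith
    have hd : (0:ℝ) < 2 * (1 - a - a ^ 2) := by linarith
    have hid : 1 + (a + a ^ 2) / (2 * (1 - a - a ^ 2)) = (2 - a - a ^ 2) / (2 * (1 - a - a ^ 2)) := by
      rw [eq_div_iff hd.ne', add_mul, div_mul_cancel₀ _ hd.ne']
      ring
    rw [← hid]
    linarith
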